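/- Let a, b ∈ ℂⁿ be linearly independent vectors and set X = aaᵀ + bbᵀ. Then there exists λ ∈ ℂ with X² = λX if and only if aᵀa = bᵀb and aᵀb = 0. -/

import Mathlib

open Matrix

lemma vecMulVec_mulVec' {n : ℕ} (a b v : Fin n → ℂ) :
    (vecMulVec a b) *ᵥ v = (b ⬝ᵥ v) • a := by
  ext i
  simp only [mulVec, vecMulVec_apply, dotProduct, Pi.smul_apply, smul_eq_mul,
    Finset.sum_mul]
  exact Finset.sum_congr rfl fun k _ => by ring

lemma vecMulVec_mul' {n : ℕ} (a b c d : Fin n → ℂ) :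
    vecMulVec a b * vecMulVec c d = (b ⬝ᵥ c) • vecMulVec a d := by
  ext i j
  simp only [mul_apply, vecMulVec_apply, Matrix.smul_apply, smul_eq_mul, dotProduct,
    Finset.sum_mul]
  exact Finset.sum_congr rfl fun k _ => by ring

/-- Every linear functional on ℂⁿ is given by dot product. -/
lemma exists_dual_vec {n : ℕ} (ℓ : (Fin n → ℂ) →ₗ[ℂ] ℂ) :
    ∃ u : Fin n → ℂ, ∀ v, v ⬝ᵥ u = ℓ v := by
  refine ⟨fun i => ℓ (Pi.single i 1), fun v => ?_⟩
  have hv : v = ∑ i, v i • (Pi.single i 1 : Fin n → ℂ) := by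
    ext j; simp [Pi.single_apply]
  conv_rhs => rw [hv]
  rw [map_sum]
  simp [dotProduct]

lemma exists_dual_pair {n : ℕ} (a b : Fin n → ℂ) (hab : LinearIndependent ℂ ![a, b]) :
    ∃ u w : Fin n → ℂ, a ⬝ᵥ u = 1 ∧ b ⬝ᵥ u = 0 ∧ a ⬝ᵥ w = 0 ∧ b ⬝ᵥ w = 1 := by
  have ha : a ∈ Submodule.span ℂ (Set.range ![a, b]) :=
    Submodule.subset_span ⟨0, rfl⟩
  have hb : b ∈ Submodule.span ℂ (Set.range ![a, b]) :=
    Submodule.subset_span ⟨1, rfl⟩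
  have key : ∀ i : Fin 2, ∃ u : Fin n → ℂ,
      a ⬝ᵥ u = (Finsupp.single (0 : Fin 2) (1:ℂ)) i ∧
      b ⬝ᵥ u = (Finsupp.single (1 : Fin 2) (1:ℂ)) i := by
    intro i
    obtain ⟨g, hg⟩ := LinearMap.exists_extend ((Finsupp.lapply i) ∘ₗ hab.repr)
    obtain ⟨u, hu⟩ := exists_dual_vec g
    refine ⟨u, ?_, ?_⟩
    · rw [hu a]
      have h := congrFun (congrArg DFunLike.coe hg) ⟨a, ha⟩
      simp only [LinearMap.comp_apply, Submodule.subtype_apply, Finsupp.lapply_apply] at h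
      rw [h, hab.repr_eq_single 0 ⟨a, ha⟩ rfl]
    · rw [hu b]
      have h := congrFun (congrArg DFunLike.coe hg) ⟨b, hb⟩
      simp only [LinearMap.comp_apply, Submodule.subtype_apply, Finsupp.lapply_apply] at h
      rw [h, hab.repr_eq_single 1 ⟨b, hb⟩ rfl]
  obtain ⟨u, hu1, hu2⟩ := key 0
  obtain ⟨w, hw1, hw2⟩ := key 1
  simp only [Finsupp.single_apply] at hu1 hu2 hw1 hw2
  norm_num at hu1 hu2 hw1 hw2
  exact ⟨u, w, hu1, hu2, hw1, hw2⟩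

/-- For linearly independent `a, b ∈ ℂⁿ` and `X = aaᵀ + bbᵀ`, the matrix `X²`
is proportional to `X` iff `aᵀa = bᵀb` and `aᵀb = 0`. -/
theorem square_proportional_iff (n : ℕ) (a b : Fin n → ℂ)
    (hab : LinearIndependent ℂ ![a, b]) :
    (∃ lam : ℂ, (vecMulVec a a + vecMulVec b b) * (vecMulVec a a + vecMulVec b b) =
        lam • (vecMulVec a a + vecMulVec b b)) ↔
      a ⬝ᵥ a = b ⬝ᵥ b ∧ a ⬝ᵥ b = 0 := by
  have hpair := LinearIndependent.pair_iff.mp hab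
  constructor
  · rintro ⟨lam, h⟩
    obtain ⟨u, w, hu1, hu2, hw1, hw2⟩ := exists_dual_pair a b hab
    have hu := congrArg (· *ᵥ u) h
    have hw := congrArg (· *ᵥ w) h
    simp only [← mulVec_mulVec, add_mulVec, vecMulVec_mulVec', smul_mulVec,
      smul_add, smul_smul, hu1, hu2, hw1, hw2, one_smul, zero_smul, add_zero,
      zero_add, mul_one, mul_zero, smul_zero] at hu hw
    -- hu : (a⬝a) • a + (b⬝a) • b = lam • a
    -- hw : (a⬝b) • a + (b⬝b) • b = lam • b
    have hu' : (a ⬝ᵥ a - lam) • a + (b ⬝ᵥ a) • b = 0 := by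
      rw [sub_smul, ← sub_eq_zero.mpr hu]; abel
    have hw' : (a ⬝ᵥ b) • a + (b ⬝ᵥ b - lam) • b = 0 := by
      rw [sub_smul, ← sub_eq_zero.mpr hw]; abel
    obtain ⟨h1, h2⟩ := hpair _ _ hu'
    obtain ⟨h3, h4⟩ := hpair _ _ hw'
    rw [sub_eq_zero] at h1 h4
    exact ⟨h1.trans h4.symm, h3⟩
  · rintro ⟨h1, h2⟩
    refine ⟨a ⬝ᵥ a, ?_⟩
    have hba : b ⬝ᵥ a = 0 := by rwa [dotProduct_comm] at h2
    rw [add_mul, mul_add, mul_add, vecMulVec_mul', vecMulVec_mul', vecMulVec_mul',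
      vecMulVec_mul', h2, hba, zero_smul, zero_smul, ← h1, smul_add]
    simp
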